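/- Let γ ∈ ℕ and set K_γ = 2·ω_γ·√(2/(3·C_{γγγγ})). Define the rescaled one-mode data ξ by ξ^m = K_γ if m = γ and ξ^m = 0 otherwise. Then ξ is a zero of the resonant operator of the spherically symmetric conformal cubic wave equation: for every m ∈ ℕ, ω_m²·ξ^m − K_γ³·C_{γγγm}·(1/(2π))·∫_0^{2π} cos³(ω_γ·t)·cos(ω_m·t) dt = 0. -/

import Mathlib

open MeasureTheory
open Real intervalIntegral

noncomputable def chebU : ℕ → ℝ → ℝ
  | 0, _ => 1
  | 1, y => 2 * y
  | n + 2, y => 2 * y * chebU (n + 1) y - chebU n y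

lemma chebU_cont : ∀ n, Continuous (chebU n)
  | 0 => by simp only [chebU]; fun_prop
  | 1 => by simp only [chebU]; fun_prop
  | n + 2 => by
    have h1 := chebU_cont (n+1)
    have h0 := chebU_cont n
    simp only [chebU]; fun_prop

lemma chebU_cos : ∀ (n : ℕ) (θ : ℝ), chebU n (Real.cos θ) * Real.sin θ = Real.sin ((n+1)*θ)
  | 0, θ => by simp [chebU]
  | 1, θ => by
    simp only [chebU]
    rw [show ((1:ℕ)+1:ℝ)*θ = 2*θ by push_cast; ring, Real.sin_two_mul]; ring
  | n + 2, θ => by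
    have h1 := chebU_cos (n+1) θ
    have h0 := chebU_cos n θ
    simp only [chebU]
    have e1 := Real.sin_add (((n:ℝ)+2)*θ) θ
    have e2 := Real.sin_sub (((n:ℝ)+2)*θ) θ
    push_cast at h1 h0 ⊢
    have : ((n:ℝ)+2+1)*θ = ((n:ℝ)+2)*θ + θ := by ring
    rw [this, e1]
    have : ((n:ℝ)+1)*θ = ((n:ℝ)+2)*θ - θ := by ring
    rw [this, e2] at h0
    have : ((n:ℝ)+1+1)*θ = ((n:ℝ)+2)*θ := by ring
    rw [this] at h1
    linear_combination 2 * Real.cos θ * h1 - h0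


lemma two_mul_chebU (k : ℕ) (y : ℝ) :
    2 * y * chebU (k + 1) y = chebU (k + 2) y + chebU k y := by
  simp only [chebU]; ring

lemma chebU_mul : ∀ (b d : ℕ) (y : ℝ),
    chebU (b + d) y * chebU b y = ∑ t ∈ Finset.range (b + 1), chebU (d + 2 * t) y
  | 0, d, y => by simp [chebU]
  | 1, d, y => by
    have h := two_mul_chebU d y
    rw [show chebU 1 y = 2 * y from rfl, Finset.sum_range_succ, Finset.sum_range_one,
      show 1 + d = d + 1 by ring, show d + 2 * 0 = d by ring, show d + 2 * 1 = d + 2 by ring]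
    linear_combination h
  | b + 2, d, y => by
    have ih1 := chebU_mul (b + 1) (d + 1) y
    have ih0 := chebU_mul b (d + 2) y
    have lhs : chebU (b + 2 + d) y * chebU (b + 2) y
        = 2 * y * (chebU (b + 1 + (d + 1)) y * chebU (b + 1) y)
          - chebU (b + (d + 2)) y * chebU b y := by
      rw [show chebU (b + 2) y = 2 * y * chebU (b+1) y - chebU b y from rfl,
        show b + 1 + (d + 1) = b + 2 + d by ring, show b + (d + 2) = b + 2 + d by ring]
      ring
    rw [lhs, ih1, ih0, Finset.mul_sum]
    have step : ∀ t, 2 * y * chebU (d + 1 + 2 * t) y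
        = chebU (d + 2 + 2 * t) y + chebU (d + 2 * t) y := by
      intro t
      have := two_mul_chebU (d + 2 * t) y
      rw [show d + 1 + 2*t = d + 2*t + 1 by ring, this,
        show d + 2 + 2*t = d + 2*t + 2 by ring]
    simp only [step, Finset.sum_add_distrib]
    rw [Finset.sum_range_succ (fun t => chebU (d + 2 + 2 * t) y) (b+1),
      Finset.sum_range_succ (fun t => chebU (d + 2 * t) y) (b+2),
      show d + 2 + 2 * (b+1) = d + 2 * (b+2) by ring]
    ring

-- generic: ∫ cos(c t) over [0, 2π] and [0, π]
lemma integral_cos_int_mul (c : ℤ) :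
    ∫ t in (0:ℝ)..(2*Real.pi), Real.cos ((c:ℝ)*t) = if c = 0 then 2*Real.pi else 0 := by
  by_cases hc : c = 0
  · simp [hc, Real.pi_pos.le]
  · have hc' : (c:ℝ) ≠ 0 := Int.cast_ne_zero.mpr hc
    rw [if_neg hc, intervalIntegral.integral_comp_mul_left (f := Real.cos) hc',
      integral_cos]
    have : (c:ℝ) * (2*Real.pi) = ((2*c : ℤ):ℝ) * Real.pi := by push_cast; ring
    rw [this, Real.sin_int_mul_pi]
    simp

lemma integral_cos_nat_mul_pi (c : ℕ) :
    ∫ t in (0:ℝ)..Real.pi, Real.cos ((c:ℝ)*t) = if c = 0 then Real.pi else 0 := by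
  by_cases hc : c = 0
  · simp [hc]
  · have hc' : (c:ℝ) ≠ 0 := Nat.cast_ne_zero.mpr hc
    rw [if_neg hc, intervalIntegral.integral_comp_mul_left (f := Real.cos) hc',
      integral_cos]
    simp [Real.sin_nat_mul_pi]

lemma integral_sqrt_sub (f : ℝ → ℝ) (hf : Continuous f) :
    ∫ y in (-1:ℝ)..1, f y * Real.sqrt (1 - y^2)
      = ∫ θ in (0:ℝ)..Real.pi, f (Real.cos θ) * Real.sin θ ^ 2 := by
  have g_cont : Continuous (fun y : ℝ => f y * Real.sqrt (1 - y^2)) := by fun_prop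
  have key := intervalIntegral.integral_comp_smul_deriv (a := (0:ℝ)) (b := Real.pi)
    (f := Real.cos) (f' := fun θ => -Real.sin θ)
    (g := fun y => f y * Real.sqrt (1 - y^2))
    (fun x _ => Real.hasDerivAt_cos x) (by fun_prop) g_cont
  rw [Real.cos_zero, Real.cos_pi] at key
  rw [intervalIntegral.integral_symm 1 (-1), ← key, ← intervalIntegral.integral_neg]
  apply intervalIntegral.integral_congr
  intro θ hθ
  rw [Set.uIcc_of_le Real.pi_pos.le] at hθ
  have hs : 0 ≤ Real.sin θ := Real.sin_nonneg_of_nonneg_of_le_pi hθ.1 hθ.2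
  have : Real.sqrt (1 - Real.cos θ ^ 2) = Real.sin θ := by
    rw [show 1 - Real.cos θ ^ 2 = Real.sin θ ^ 2 by
      have := Real.sin_sq_add_cos_sq θ; linarith]
    exact Real.sqrt_sq hs
  simp only [Function.comp, smul_eq_mul, this]
  ring

lemma integral_chebU_sqrt (j : ℕ) :
    ∫ y in (-1:ℝ)..1, chebU j y * Real.sqrt (1 - y^2)
      = if j = 0 then Real.pi/2 else 0 := by
  rw [integral_sqrt_sub _ (chebU_cont j)]
  have ptw : ∀ θ : ℝ, chebU j (Real.cos θ) * Real.sin θ ^ 2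
      = (1/2) * Real.cos ((j:ℝ)*θ) - (1/2) * Real.cos (((j+2:ℕ):ℝ)*θ) := by
    intro θ
    have h := chebU_cos j θ
    have e1 := Real.cos_sub (((j:ℝ)+1)*θ) θ
    have e2 := Real.cos_add (((j:ℝ)+1)*θ) θ
    have r1 : ((j:ℝ)+1)*θ - θ = (j:ℝ)*θ := by ring
    have r2 : ((j:ℝ)+1)*θ + θ = (((j+2:ℕ)):ℝ)*θ := by push_cast; ring
    rw [r1] at e1; rw [r2] at e2
    have hsin : Real.sin (((j:ℝ)+1)*θ) * Real.sin θ
        = (1/2) * Real.cos ((j:ℝ)*θ) - (1/2) * Real.cos (((j+2:ℕ):ℝ)*θ) := by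
      linarith
    calc chebU j (Real.cos θ) * Real.sin θ ^ 2
        = (chebU j (Real.cos θ) * Real.sin θ) * Real.sin θ := by ring
      _ = Real.sin (((j:ℝ)+1)*θ) * Real.sin θ := by rw [h]
      _ = _ := hsin
  rw [intervalIntegral.integral_congr (g := fun θ =>
      (1/2) * Real.cos ((j:ℝ)*θ) - (1/2) * Real.cos (((j+2:ℕ):ℝ)*θ)) (fun θ _ => ptw θ)]
  rw [intervalIntegral.integral_sub (((by fun_prop : Continuous fun θ:ℝ => (1/2) * Real.cos ((j:ℝ)*θ)).intervalIntegrable _ _)) (((by fun_prop : Continuous fun θ:ℝ => (1/2) * Real.cos (((j+2:ℕ):ℝ)*θ)).intervalIntegrable _ _)),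
    intervalIntegral.integral_const_mul, intervalIntegral.integral_const_mul,
    integral_cos_nat_mul_pi, integral_cos_nat_mul_pi]
  by_cases hj : j = 0 <;> simp [hj] <;> ring

lemma pair_orth (b d : ℕ) (hd : d ≠ 0) :
    ∫ y in (-1:ℝ)..1, chebU (b + d) y * chebU b y * Real.sqrt (1 - y^2) = 0 := by
  have ptw : ∀ y : ℝ, chebU (b + d) y * chebU b y * Real.sqrt (1 - y^2)
      = ∑ t ∈ Finset.range (b + 1), chebU (d + 2*t) y * Real.sqrt (1 - y^2) := by
    intro y
    rw [← Finset.sum_mul, ← chebU_mul]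
  rw [intervalIntegral.integral_congr (fun y _ => ptw y),
    intervalIntegral.integral_finset_sum (f := fun t y => chebU (d + 2*t) y * Real.sqrt (1 - y^2)) (fun t _ =>
      ((chebU_cont (d + 2*t)).mul (by fun_prop : Continuous fun y:ℝ => Real.sqrt (1-y^2))).intervalIntegrable _ _)]
  apply Finset.sum_eq_zero
  intro t _
  rw [integral_chebU_sqrt, if_neg (by omega)]

lemma cubic_orth (γ : ℕ) :
    ∫ y in (-1:ℝ)..1,
      chebU γ y * chebU γ y * chebU γ y * chebU (3*γ+2) y * Real.sqrt (1 - y^2) = 0 := by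
  have ptw : ∀ y : ℝ, chebU γ y * chebU γ y * chebU γ y * chebU (3*γ+2) y * Real.sqrt (1 - y^2)
      = ∑ t ∈ Finset.range (γ+1), ∑ s ∈ Finset.range (γ+1),
          chebU (2*s + (2*γ+2+2*t - 2*s)) y * chebU (2*s) y * Real.sqrt (1 - y^2) := by
    intro y
    have h1 : chebU γ y * chebU γ y = ∑ s ∈ Finset.range (γ+1), chebU (2*s) y := by
      have := chebU_mul γ 0 y
      simpa using this
    have h2 : chebU γ y * chebU (3*γ+2) y
        = ∑ t ∈ Finset.range (γ+1), chebU (2*γ+2+2*t) y := by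
      have := chebU_mul γ (2*γ+2) y
      rw [show γ + (2*γ+2) = 3*γ+2 by ring] at this
      rw [mul_comm]
      simpa using this
    have idx : ∀ s t : ℕ, s ≤ γ → 2*s + (2*γ+2+2*t - 2*s) = 2*γ+2+2*t := by
      intro s t hs; omega
    calc chebU γ y * chebU γ y * chebU γ y * chebU (3*γ+2) y * Real.sqrt (1 - y^2)
        = (chebU γ y * chebU (3*γ+2) y) * (chebU γ y * chebU γ y) * Real.sqrt (1 - y^2) := by
          ring
      _ = _ := by
          rw [h2, h1, Finset.sum_mul_sum]
          rw [Finset.sum_mul]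
          refine Finset.sum_congr rfl fun t _ => ?_
          rw [Finset.sum_mul]
          refine Finset.sum_congr rfl fun s hs => ?_
          rw [idx s t (Nat.lt_succ_iff.mp (Finset.mem_range.mp hs))]
  have hc : ∀ k l : ℕ, Continuous fun y:ℝ => chebU k y * chebU l y * Real.sqrt (1-y^2) := by
    intro k l
    exact ((chebU_cont k).mul (chebU_cont l)).mul
      (by fun_prop : Continuous fun y:ℝ => Real.sqrt (1-y^2))
  rw [intervalIntegral.integral_congr (fun y _ => ptw y),
    intervalIntegral.integral_finset_sum (fun t _ =>
      (continuous_finset_sum _ fun s _ => hc _ _).intervalIntegrable _ _)]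
  refine Finset.sum_eq_zero fun t _ => ?_
  rw [intervalIntegral.integral_finset_sum (fun s _ => (hc _ _).intervalIntegrable _ _)]
  refine Finset.sum_eq_zero fun s hs => ?_
  exact pair_orth (2*s) (2*γ+2+2*t - 2*s)
    (by have := Nat.lt_succ_iff.mp (Finset.mem_range.mp hs); omega)

lemma time_integral (a b : ℕ) :
    ∫ t in (0:ℝ)..(2*Real.pi),
        Real.cos (((a:ℝ)+1)*t) ^ 3 * Real.cos (((b:ℝ)+1)*t)
      = (if b = a then 3*Real.pi/4 else 0) + (if b = 3*a+2 then Real.pi/4 else 0) := by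
  have ptw : ∀ t : ℝ, Real.cos (((a:ℝ)+1)*t) ^ 3 * Real.cos (((b:ℝ)+1)*t)
      = (1/8) * Real.cos (((3*(a:ℤ)+(b:ℤ)+4 : ℤ):ℝ)*t)
        + (1/8) * Real.cos (((3*(a:ℤ)+2-(b:ℤ) : ℤ):ℝ)*t)
        + (3/8) * Real.cos ((((a:ℤ)+(b:ℤ)+2 : ℤ):ℝ)*t)
        + (3/8) * Real.cos ((((a:ℤ)-(b:ℤ) : ℤ):ℝ)*t) := by
    intro t
    set x := ((a:ℝ)+1)*t
    set y := ((b:ℝ)+1)*t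
    have h3 := Real.cos_three_mul x
    have e1 : Real.cos (3*x+y) = Real.cos (3*x) * Real.cos y - Real.sin (3*x) * Real.sin y :=
      Real.cos_add _ _
    have e2 : Real.cos (3*x-y) = Real.cos (3*x) * Real.cos y + Real.sin (3*x) * Real.sin y :=
      Real.cos_sub _ _
    have f1 : Real.cos (x+y) = Real.cos x * Real.cos y - Real.sin x * Real.sin y :=
      Real.cos_add _ _
    have f2 : Real.cos (x-y) = Real.cos x * Real.cos y + Real.sin x * Real.sin y :=
      Real.cos_sub _ _
    have c1 : ((3*(a:ℤ)+(b:ℤ)+4 : ℤ):ℝ)*t = 3*x+y := by push_cast [x, y]; ring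
    have c2 : ((3*(a:ℤ)+2-(b:ℤ) : ℤ):ℝ)*t = 3*x-y := by push_cast [x, y]; ring
    have c3 : (((a:ℤ)+(b:ℤ)+2 : ℤ):ℝ)*t = x+y := by push_cast [x, y]; ring
    have c4 : (((a:ℤ)-(b:ℤ) : ℤ):ℝ)*t = x-y := by push_cast [x, y]; ring
    rw [c1, c2, c3, c4, e1, e2, f1, f2]
    linear_combination (-(Real.cos y) / 4) * h3
  rw [intervalIntegral.integral_congr (fun t _ => ptw t)]
  have ii : ∀ c : ℤ, IntervalIntegrable (fun t:ℝ => Real.cos ((c:ℝ)*t))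
      MeasureTheory.volume 0 (2*Real.pi) := fun c =>
    (by fun_prop : Continuous fun t:ℝ => Real.cos ((c:ℝ)*t)).intervalIntegrable _ _
  rw [intervalIntegral.integral_add (((ii _).const_mul _).add
        (((ii _).const_mul _)) |>.add ((ii _).const_mul _)) ((ii _).const_mul _),
    intervalIntegral.integral_add (((ii _).const_mul _).add ((ii _).const_mul _))
      ((ii _).const_mul _),
    intervalIntegral.integral_add ((ii _).const_mul _) ((ii _).const_mul _),
    intervalIntegral.integral_const_mul, intervalIntegral.integral_const_mul,
    intervalIntegral.integral_const_mul, intervalIntegral.integral_const_mul,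
    integral_cos_int_mul, integral_cos_int_mul, integral_cos_int_mul, integral_cos_int_mul]
  rw [if_neg (show ¬(3*(a:ℤ)+(b:ℤ)+4 = 0) by omega),
    if_neg (show ¬((a:ℤ)+(b:ℤ)+2 = 0) by omega)]
  by_cases h1 : b = a
  · rw [if_neg (show ¬(3*(a:ℤ)+2-(b:ℤ) = 0) by omega),
      if_pos (show ((a:ℤ)-(b:ℤ) = 0) by omega), if_pos h1,
      if_neg (show ¬(b = 3*a+2) by omega)]
    ring
  · by_cases h2 : b = 3*a+2
    · rw [if_pos (show (3*(a:ℤ)+2-(b:ℤ) = 0) by omega),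
        if_neg (show ¬((a:ℤ)-(b:ℤ) = 0) by omega), if_neg h1, if_pos h2]
      ring
    · rw [if_neg (show ¬(3*(a:ℤ)+2-(b:ℤ) = 0) by omega),
        if_neg (show ¬((a:ℤ)-(b:ℤ) = 0) by omega), if_neg h1, if_neg h2]
      ring

noncomputable def Ccoef (i j k m : ℕ) : ℝ :=
  (2 / Real.pi) *
    ∫ y in (-1:ℝ)..1, chebU i y * chebU j y * chebU k y * chebU m y * Real.sqrt (1 - y ^ 2)

noncomputable def Kcw (γ : ℕ) : ℝ := 2 * ((γ:ℝ) + 1) * Real.sqrt (2 / (3 * Ccoef γ γ γ γ))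

/-- The rescaled one-mode initial data `ξ^m = K_γ·𝟙(m = γ)` is a zero of the resonant
operator of the spherically symmetric conformal cubic wave equation. -/
theorem one_mode_is_zero_of_resonant_operator (γ m : ℕ) :
    ((m:ℝ) + 1) ^ 2 * (if m = γ then Kcw γ else 0) -
      (Kcw γ) ^ 3 * Ccoef γ γ γ m *
        ((1 / (2 * Real.pi)) *
          ∫ t in (0:ℝ)..(2 * Real.pi),
            Real.cos (((γ:ℝ) + 1) * t) ^ 3 * Real.cos (((m:ℝ) + 1) * t)) = 0 := by
  have hπ : Real.pi ≠ 0 := Real.pi_ne_zero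
  rw [time_integral γ m]
  by_cases h1 : m = γ
  · subst h1
    rw [if_pos rfl, if_pos rfl, if_neg (by omega)]
    set C := Ccoef m m m m with hC
    by_cases hCpos : 0 < C
    · have hx : (0:ℝ) ≤ 2 / (3 * C) := by positivity
      have hK2 : Kcw m ^ 2 = 4 * ((m:ℝ)+1)^2 * (2 / (3 * C)) := by
        rw [Kcw, mul_pow, mul_pow, Real.sq_sqrt hx]; ring
      have h3C : (3 * C) ≠ 0 := by positivity
      have : Kcw m ^ 3 = Kcw m ^ 2 * Kcw m := by ring
      rw [this, hK2]
      field_simp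
      ring
    · have hK : Kcw m = 0 := by
        have hx : 2 / (3 * C) ≤ 0 := by
          rcases lt_or_eq_of_le (not_lt.mp hCpos) with h | h
          · exact le_of_lt (div_neg_of_pos_of_neg (by norm_num) (by linarith))
          · rw [h, mul_zero, div_zero]
        rw [Kcw, ← hC, Real.sqrt_eq_zero_of_nonpos hx, mul_zero]
      rw [hK]; ring
  · rw [if_neg h1, if_neg h1]
    by_cases h2 : m = 3*γ+2
    · have : Ccoef γ γ γ m = 0 := by
        rw [Ccoef, h2]
        exact mul_eq_zero_of_right _ (cubic_orth γ)
      rw [this]; ring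
    · rw [if_neg h2]; ring
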